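/- Every summable ideal is Katětov below the density-zero ideal: if f: ω → [0,∞) satisfies lim f(m) = 0 and ∑_m f(m) = ∞, then there exists h: ω → ω such that for every A with ∑_{m∈A} f(m) < ∞, the preimage h⁻¹[A] has asymptotic density zero. -/

import Mathlib

open Filter Finset

noncomputable section Aux19

variable (f : ℕ → ℝ)

/-- partial sums of `f` -/
def pS19 (n : ℕ) : ℝ := ∑ m ∈ Finset.range n, f m

/-- first index where partial sums exceed `k+1` -/
def Bk19 (k : ℕ) : ℕ := sInf {B | (k : ℝ) + 1 ≤ pS19 f B}

def Mk19 (k : ℕ) : ℝ := pS19 f (Bk19 f k)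

def idx19 (k : ℕ) : ℕ := k + Bk19 f k

def stg19 (i : ℕ) : ℕ := Nat.findGreatest (fun k => idx19 f k ≤ i) i

def gcount19 (i m : ℕ) : ℕ := ⌈((2 : ℝ) ^ i * f m) / Mk19 f (stg19 f i)⌉₊

def psum19 (i m : ℕ) : ℕ := ∑ m' ∈ Finset.range m, gcount19 f i m'

def hmap19 (n : ℕ) : ℕ :=
  sInf {m | n - 2 ^ Nat.log 2 n < psum19 f (Nat.log 2 n) (m + 1)}

end Aux19

section Aux19Lemmas

variable {f : ℕ → ℝ} (hf0 : ∀ m, 0 ≤ f m) (hdiv : ¬ Summable f)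
include hf0 hdiv

lemma aux19_ex (k : ℕ) : {B | (k : ℝ) + 1 ≤ pS19 f B}.Nonempty := by
  have hS : Tendsto (fun n => ∑ i ∈ Finset.range n, f i) atTop atTop :=
    (not_summable_iff_tendsto_nat_atTop_of_nonneg hf0).1 hdiv
  obtain ⟨B, hB⟩ := (hS.eventually_ge_atTop ((k : ℝ) + 1)).exists
  exact ⟨B, hB⟩

lemma aux19_Mk (k : ℕ) : (k : ℝ) + 1 ≤ Mk19 f k :=
  Nat.sInf_mem (aux19_ex hf0 hdiv k)

lemma aux19_Mpos (k : ℕ) : (0 : ℝ) < Mk19 f k := by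
  have := aux19_Mk hf0 hdiv k
  have : (0:ℝ) ≤ (k : ℝ) := Nat.cast_nonneg k
  linarith [aux19_Mk hf0 hdiv k]

lemma aux19_Bpos (k : ℕ) : 1 ≤ Bk19 f k := by
  by_contra h
  push_neg at h
  have hB0 : Bk19 f k = 0 := by omega
  have := aux19_Mk hf0 hdiv k
  rw [Mk19, hB0] at this
  simp [pS19] at this
  have : (0:ℝ) ≤ (k : ℝ) := Nat.cast_nonneg k
  linarith [aux19_Mk hf0 hdiv k, show pS19 f 0 = 0 by simp [pS19], hB0]

lemma aux19_cov (i : ℕ) : 2 ^ i ≤ psum19 f i (Bk19 f (stg19 f i)) := by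
  set k := stg19 f i with hk
  have hM := aux19_Mpos hf0 hdiv k
  have h1 : ((2:ℝ) ^ i) ≤ ((psum19 f i (Bk19 f k) : ℕ) : ℝ) := by
    have he : ((2:ℝ) ^ i) = ∑ m ∈ Finset.range (Bk19 f k), (2:ℝ) ^ i * f m / Mk19 f k := by
      rw [← Finset.sum_div, ← Finset.mul_sum]
      have hsum : ∑ m ∈ Finset.range (Bk19 f k), f m = Mk19 f k := rfl
      rw [hsum]
      field_simp
    rw [he]
    rw [psum19]
    push_cast
    refine Finset.sum_le_sum fun m _ => ?_
    exact Nat.le_ceil _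
  exact_mod_cast h1

lemma aux19_hmap {n i : ℕ} (h1 : 2 ^ i ≤ n) (h2 : n < 2 ^ (i + 1)) :
    psum19 f i (hmap19 f n) ≤ n - 2 ^ i ∧
      n - 2 ^ i < psum19 f i (hmap19 f n + 1) ∧
      hmap19 f n < Bk19 f (stg19 f i) := by
  have hlog : Nat.log 2 n = i := Nat.log_eq_of_pow_le_of_lt_pow h1 h2
  have hpow : 2 ^ (i + 1) = 2 ^ i + 2 ^ i := by ring
  have hoff : n - 2 ^ i < 2 ^ i := by omega
  have hBpos := aux19_Bpos hf0 hdiv (stg19 f i)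
  have hmeq : hmap19 f n = sInf {m | n - 2 ^ i < psum19 f i (m + 1)} := by
    rw [hmap19, hlog]
  have hmem : (Bk19 f (stg19 f i) - 1) ∈ {m | n - 2 ^ i < psum19 f i (m + 1)} := by
    show n - 2 ^ i < psum19 f i (Bk19 f (stg19 f i) - 1 + 1)
    rw [Nat.sub_add_cancel hBpos]
    exact lt_of_lt_of_le hoff (aux19_cov hf0 hdiv i)
  have hne : {m | n - 2 ^ i < psum19 f i (m + 1)}.Nonempty := ⟨_, hmem⟩
  have hspec := Nat.sInf_mem hne
  rw [← hmeq] at hspec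
  have hub : hmap19 f n ≤ Bk19 f (stg19 f i) - 1 := by
    rw [hmeq]; exact Nat.sInf_le hmem
  refine ⟨?_, hspec, by omega⟩
  rcases Nat.eq_zero_or_pos (hmap19 f n) with h0 | hpos
  · rw [h0]; simp [psum19]
  · have hlt : hmap19 f n - 1 < sInf {m | n - 2 ^ i < psum19 f i (m + 1)} := by omega
    have hnot := Nat.notMem_of_lt_sInf hlt
    rw [Set.mem_setOf_eq, Nat.sub_add_cancel hpos] at hnot
    omega

lemma aux19_scale (A : Set ℕ) [DecidablePred (· ∈ A)] (i : ℕ) :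
    ((Finset.Ico (2 ^ i) (2 ^ (i + 1))).filter (fun n => hmap19 f n ∈ A)).card ≤
      ∑ m ∈ (Finset.range (Bk19 f (stg19 f i))).filter (· ∈ A), gcount19 f i m := by
  rw [Finset.card_eq_sum_card_fiberwise (f := hmap19 f)
      (t := (Finset.range (Bk19 f (stg19 f i))).filter (· ∈ A))
      (fun x hx => by
        rw [Finset.mem_coe, Finset.mem_filter] at hx ⊢
        obtain ⟨hxI, hxA⟩ := hx
        rw [Finset.mem_Ico] at hxI
        exact ⟨Finset.mem_range.2 (aux19_hmap hf0 hdiv hxI.1 hxI.2).2.2, hxA⟩)]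
  refine Finset.sum_le_sum fun m hm => ?_
  have hcard : (Finset.Ico (psum19 f i m) (psum19 f i (m + 1))).card = gcount19 f i m := by
    rw [Nat.card_Ico]
    have : psum19 f i (m + 1) = psum19 f i m + gcount19 f i m := Finset.sum_range_succ _ _
    omega
  rw [← hcard]
  refine Finset.card_le_card_of_injOn (fun n => n - 2 ^ i) ?_ ?_
  · intro x hx
    rw [Finset.mem_coe, Finset.mem_filter, Finset.mem_filter, Finset.mem_Ico] at hx
    obtain ⟨⟨⟨hx1, hx2⟩, _⟩, hxm⟩ := hx
    have := aux19_hmap hf0 hdiv hx1 hx2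
    rw [hxm] at this
    exact Finset.mem_Ico.2 ⟨this.1, this.2.1⟩
  · intro x hx y hy hxy
    rw [Finset.mem_coe, Finset.mem_filter, Finset.mem_filter, Finset.mem_Ico] at hx hy
    have hx1 := hx.1.1.1
    have hy1 := hy.1.1.1
    simp only at hxy
    omega

end Aux19Lemmas

/-- Every summable ideal is Katětov below the asymptotic density-zero ideal. -/
theorem stmt19 (f : ℕ → ℝ) (hf0 : ∀ m, 0 ≤ f m)
    (hlim : Filter.Tendsto f Filter.atTop (nhds 0))
    (hdiv : ¬ Summable f) :
    ∃ h : ℕ → ℕ, ∀ A : Set ℕ, Summable (fun m : A => f m) →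
      Filter.Tendsto (fun n : ℕ => (((h ⁻¹' A) ∩ Set.Iic n).ncard : ℝ) / n)
        Filter.atTop (nhds 0) := by
  classical
  refine ⟨hmap19 f, fun A hA => ?_⟩
  haveI : DecidablePred (· ∈ A) := Classical.decPred _
  -- the indicator sum
  have hAsum : Summable (A.indicator f) := summable_subtype_iff_indicator.mp hA
  set SA : ℝ := ∑' m, A.indicator f m with hSA
  have hSA0 : 0 ≤ SA :=
    tsum_nonneg fun m => Set.indicator_nonneg (fun a _ => hf0 a) m
  -- sum of f over any finite subset of A is at most SA
  have hsumA : ∀ t : Finset ℕ, (∀ m ∈ t, m ∈ A) → ∑ m ∈ t, f m ≤ SA := by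
    intro t ht
    have : ∑ m ∈ t, f m = ∑ m ∈ t, A.indicator f m :=
      Finset.sum_congr rfl fun m hm => (Set.indicator_of_mem (ht m hm) f).symm
    rw [this]
    exact Summable.sum_le_tsum t (fun m _ => Set.indicator_nonneg (fun a _ => hf0 a) m) hAsum
  rw [Metric.tendsto_atTop]
  intro ε hε
  -- choose the stage K
  obtain ⟨K, hK⟩ := exists_nat_gt (4 * (SA + 1) / ε)
  set δ : ℝ := SA / ((K : ℝ) + 1) + 1 / 2 ^ K with hδ
  have hδ0 : 0 ≤ δ := by positivity
  have hδε : 2 * δ < ε / 2 := by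
    have h2K : (K : ℝ) + 1 ≤ 2 ^ K := by
      exact_mod_cast Nat.succ_le_of_lt (Nat.lt_two_pow_self (n := K))
    have h1 : (1 : ℝ) / 2 ^ K ≤ 1 / ((K : ℝ) + 1) :=
      one_div_le_one_div_of_le (by positivity) h2K
    have h2 : δ ≤ (SA + 1) / ((K : ℝ) + 1) := by
      rw [hδ, add_div]
      gcongr
    have h3 : (SA + 1) / ((K : ℝ) + 1) < ε / 4 := by
      rw [div_lt_iff₀ (by positivity)]
      have : 4 * (SA + 1) / ε < K + 1 := by linarith
      rw [div_lt_iff₀ hε] at this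
      linarith
    linarith
  set i₀ : ℕ := idx19 f K with hi₀
  -- per-scale real bound
  have hscaleR : ∀ i : ℕ, i₀ ≤ i →
      ((((Finset.Ico (2 ^ i) (2 ^ (i + 1))).filter
          (fun n => hmap19 f n ∈ A)).card : ℕ) : ℝ) ≤ 2 ^ i * δ := by
    intro i hi
    set k := stg19 f i with hk
    have hkK : K ≤ k := Nat.le_findGreatest (le_trans (Nat.le_add_right _ _) hi) hi
    have hidxk : idx19 f k ≤ i :=
      Nat.findGreatest_spec (P := fun j => idx19 f j ≤ i) (m := K) (n := i)
        (le_trans (Nat.le_add_right _ _) hi) hi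
    have hMk : ((K : ℝ) + 1) ≤ Mk19 f k := by
      have := aux19_Mk hf0 hdiv k
      have hcast : ((K : ℝ)) ≤ (k : ℝ) := Nat.cast_le.2 hkK
      linarith
    have hMpos := aux19_Mpos hf0 hdiv k
    have hBle : Bk19 f k ≤ i - K := by
      have : k + Bk19 f k ≤ i := hidxk
      omega
    have hKi : K ≤ i := le_trans hkK (le_trans (Nat.le_add_right _ _) hidxk)
    have hBreal : ((Bk19 f k : ℕ) : ℝ) ≤ 2 ^ i / 2 ^ K := by
      have h1 : Bk19 f k < 2 ^ (i - K) := lt_of_le_of_lt hBle Nat.lt_two_pow_self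
      have h2 : ((Bk19 f k : ℕ) : ℝ) ≤ ((2:ℝ)) ^ (i - K) := by
        exact_mod_cast le_of_lt h1
      have h3 : ((2:ℝ)) ^ (i - K) * 2 ^ K = 2 ^ i := by
        rw [← pow_add, Nat.sub_add_cancel hKi]
      calc ((Bk19 f k : ℕ) : ℝ) ≤ (2:ℝ) ^ (i - K) := h2
        _ = 2 ^ i / 2 ^ K := by rw [eq_div_iff (by positivity)]; exact h3
    set t : Finset ℕ := (Finset.range (Bk19 f k)).filter (· ∈ A) with ht
    have hcount : ((Finset.Ico (2 ^ i) (2 ^ (i + 1))).filter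
        (fun n => hmap19 f n ∈ A)).card ≤ ∑ m ∈ t, gcount19 f i m :=
      aux19_scale hf0 hdiv A i
    have hcastsum : ((∑ m ∈ t, gcount19 f i m : ℕ) : ℝ) ≤
        (2 ^ i / Mk19 f k) * (∑ m ∈ t, f m) + t.card := by
      push_cast
      rw [Finset.mul_sum]
      have : ∀ m ∈ t, ((gcount19 f i m : ℕ) : ℝ) ≤ 2 ^ i / Mk19 f k * f m + 1 := by
        intro m _
        have hx : (0:ℝ) ≤ (2:ℝ) ^ i * f m / Mk19 f k := by
          exact div_nonneg (mul_nonneg (by positivity) (hf0 m)) (le_of_lt hMpos)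
        have := le_of_lt (Nat.ceil_lt_add_one hx)
        calc ((gcount19 f i m : ℕ) : ℝ) ≤ (2:ℝ) ^ i * f m / Mk19 f k + 1 := this
          _ = 2 ^ i / Mk19 f k * f m + 1 := by ring
      calc (∑ m ∈ t, ((gcount19 f i m : ℕ) : ℝ)) ≤
            ∑ m ∈ t, (2 ^ i / Mk19 f k * f m + 1) := Finset.sum_le_sum this
        _ = (∑ m ∈ t, 2 ^ i / Mk19 f k * f m) + t.card := by
            rw [Finset.sum_add_distrib]; simp
    have htsub : ∀ m ∈ t, m ∈ A := fun m hm => (Finset.mem_filter.1 hm).2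
    have htf0 : 0 ≤ ∑ m ∈ t, f m := Finset.sum_nonneg fun m _ => hf0 m
    have h5 : (2 ^ i / Mk19 f k) * (∑ m ∈ t, f m) ≤ 2 ^ i * SA / ((K:ℝ) + 1) := by
      rw [div_mul_eq_mul_div, mul_comm ((2:ℝ)^i) (∑ m ∈ t, f m), mul_comm ((2:ℝ)^i) SA]
      apply div_le_div₀ (by positivity) ?_ (by positivity) hMk
      exact mul_le_mul_of_nonneg_right (hsumA t htsub) (by positivity)
    have h6 : (t.card : ℝ) ≤ 2 ^ i / 2 ^ K := by
      refine le_trans ?_ hBreal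
      exact_mod_cast Finset.card_le_card (Finset.filter_subset _ _) |>.trans
        (le_of_eq (Finset.card_range _))
    calc ((((Finset.Ico (2 ^ i) (2 ^ (i + 1))).filter
          (fun n => hmap19 f n ∈ A)).card : ℕ) : ℝ)
        ≤ ((∑ m ∈ t, gcount19 f i m : ℕ) : ℝ) := by exact_mod_cast hcount
      _ ≤ (2 ^ i / Mk19 f k) * (∑ m ∈ t, f m) + t.card := hcastsum
      _ ≤ 2 ^ i * SA / ((K:ℝ) + 1) + 2 ^ i / 2 ^ K := by
          have := h5; have := h6; linarith
      _ = 2 ^ i * δ := by rw [hδ]; ring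
  -- splitting of the count over ranges
  have hsplit : ∀ i : ℕ, ((Finset.range (2 ^ (i + 1))).filter
      (fun n => hmap19 f n ∈ A)).card ≤
      ((Finset.range (2 ^ i)).filter (fun n => hmap19 f n ∈ A)).card +
      ((Finset.Ico (2 ^ i) (2 ^ (i + 1))).filter (fun n => hmap19 f n ∈ A)).card := by
    intro i
    have hr : Finset.range (2 ^ (i + 1)) =
        Finset.range (2 ^ i) ∪ Finset.Ico (2 ^ i) (2 ^ (i + 1)) := by
      rw [Finset.range_eq_Ico, Finset.range_eq_Ico]
      exact (Finset.Ico_union_Ico_eq_Ico (Nat.zero_le _)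
        (Nat.pow_le_pow_right (n := 2) (by norm_num) (Nat.le_succ i))).symm
    rw [hr, Finset.filter_union]
    exact Finset.card_union_le _ _
  -- induction: cumulative bound
  have hInd : ∀ i : ℕ, i₀ ≤ i →
      ((((Finset.range (2 ^ (i + 1))).filter (fun n => hmap19 f n ∈ A)).card : ℕ) : ℝ) ≤
        2 ^ i₀ + 2 ^ (i + 1) * δ := by
    intro i hi
    induction i, hi using Nat.le_induction with
    | base =>
        have h1 := hsplit i₀
        have h2 : (((Finset.range (2 ^ i₀)).filter (fun n => hmap19 f n ∈ A)).card : ℝ) ≤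
            2 ^ i₀ := by
          exact_mod_cast (Finset.card_le_card (Finset.filter_subset _ _)).trans
            (le_of_eq (Finset.card_range _))
        have h3 := hscaleR i₀ le_rfl
        have h1R : ((((Finset.range (2 ^ (i₀ + 1))).filter
            (fun n => hmap19 f n ∈ A)).card : ℕ) : ℝ) ≤
            (((Finset.range (2 ^ i₀)).filter (fun n => hmap19 f n ∈ A)).card : ℝ) +
            ((((Finset.Ico (2 ^ i₀) (2 ^ (i₀ + 1))).filter
              (fun n => hmap19 f n ∈ A)).card : ℕ) : ℝ) := by exact_mod_cast h1
        have hp : (2:ℝ) ^ i₀ * δ ≤ 2 ^ (i₀ + 1) * δ := by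
          apply mul_le_mul_of_nonneg_right ?_ hδ0
          apply pow_le_pow_right₀ (by norm_num) (Nat.le_succ _)
        linarith
    | succ i hi ih =>
        have h1 := hsplit (i + 1)
        have h1R : ((((Finset.range (2 ^ (i + 1 + 1))).filter
            (fun n => hmap19 f n ∈ A)).card : ℕ) : ℝ) ≤
            ((((Finset.range (2 ^ (i + 1))).filter (fun n => hmap19 f n ∈ A)).card : ℕ) : ℝ) +
            ((((Finset.Ico (2 ^ (i + 1)) (2 ^ (i + 1 + 1))).filter
              (fun n => hmap19 f n ∈ A)).card : ℕ) : ℝ) := by exact_mod_cast h1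
        have h3 := hscaleR (i + 1) (le_trans hi (Nat.le_succ _))
        have hp : (2:ℝ) ^ (i + 1 + 1) * δ = 2 ^ (i + 1) * δ + 2 ^ (i + 1) * δ := by ring
        linarith
  -- choose N
  obtain ⟨N₁, hN₁⟩ := exists_nat_gt ((2:ℝ) ^ i₀ * 2 / ε)
  refine ⟨max (max N₁ 1) (2 ^ i₀), fun n hn => ?_⟩
  have hnN₁ : N₁ ≤ n := le_trans (le_trans (le_max_left _ _) (le_max_left _ _)) hn
  have hn1 : 1 ≤ n := le_trans (le_trans (le_max_right _ _) (le_max_left _ _)) hn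
  have hni₀ : 2 ^ i₀ ≤ n := le_trans (le_max_right _ _) hn
  have hn0 : n ≠ 0 := by omega
  have hnR : (0:ℝ) < n := by exact_mod_cast Nat.pos_of_ne_zero hn0
  set i : ℕ := Nat.log 2 n with hilog
  have hpow1 : 2 ^ i ≤ n := Nat.pow_log_le_self 2 hn0
  have hpow2 : n < 2 ^ (i + 1) := Nat.lt_pow_succ_log_self (by norm_num) n
  have hii₀ : i₀ ≤ i := (Nat.le_log_iff_pow_le (by norm_num) hn0).2 hni₀
  -- identify the ncard with a Finset card
  have hset : (hmap19 f ⁻¹' A ∩ Set.Iic n) =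
      ↑((Finset.Iic n).filter (fun x => hmap19 f x ∈ A)) := by
    ext x
    simp only [Set.mem_inter_iff, Set.mem_preimage, Set.mem_Iic, Finset.coe_filter,
      Finset.mem_Iic, Set.mem_setOf_eq]
    tauto
  have hcard1 : ((hmap19 f ⁻¹' A ∩ Set.Iic n).ncard : ℝ) =
      (((Finset.Iic n).filter (fun x => hmap19 f x ∈ A)).card : ℝ) := by
    rw [hset, Set.ncard_coe_finset]
  have hsub : ((Finset.Iic n).filter (fun x => hmap19 f x ∈ A)).card ≤
      ((Finset.range (2 ^ (i + 1))).filter (fun x => hmap19 f x ∈ A)).card := by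
    apply Finset.card_le_card
    apply Finset.filter_subset_filter
    intro x hx
    rw [Finset.mem_Iic] at hx
    rw [Finset.mem_range]
    omega
  have hbound : ((hmap19 f ⁻¹' A ∩ Set.Iic n).ncard : ℝ) ≤ 2 ^ i₀ + 2 * n * δ := by
    rw [hcard1]
    have h1 : (((Finset.Iic n).filter (fun x => hmap19 f x ∈ A)).card : ℝ) ≤
        ((((Finset.range (2 ^ (i + 1))).filter (fun x => hmap19 f x ∈ A)).card : ℕ) : ℝ) := by
      exact_mod_cast hsub
    have h2 := hInd i hii₀
    have h3 : (2:ℝ) ^ (i + 1) ≤ 2 * n := by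
      have : ((2:ℕ) ^ i : ℝ) ≤ (n : ℝ) := by exact_mod_cast hpow1
      push_cast at this ⊢
      rw [pow_succ]
      nlinarith
    have h4 : (2:ℝ) ^ (i+1) * δ ≤ 2 * n * δ := mul_le_mul_of_nonneg_right h3 hδ0
    linarith
  rw [Real.dist_eq, sub_zero, abs_of_nonneg (by positivity)]
  have hεn : (2:ℝ) ^ i₀ / n < ε / 2 := by
    rw [div_lt_iff₀ hnR]
    have hNn : ((2:ℝ) ^ i₀ * 2 / ε) < (n : ℝ) := by
      refine lt_of_lt_of_le hN₁ ?_
      exact_mod_cast hnN₁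
    rw [div_lt_iff₀ hε] at hNn
    linarith
  have : ((hmap19 f ⁻¹' A ∩ Set.Iic n).ncard : ℝ) / n ≤
      (2 ^ i₀ + 2 * n * δ) / n := by
    gcongr
  calc ((hmap19 f ⁻¹' A ∩ Set.Iic n).ncard : ℝ) / n
      ≤ (2 ^ i₀ + 2 * n * δ) / n := this
    _ = 2 ^ i₀ / n + 2 * δ := by field_simp
    _ < ε / 2 + ε / 2 := by linarith
    _ = ε := by ring
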